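/- arXiv:1812.10596 — 5 statements merged into one kernel-verified Lean document; each statement's English description precedes it below -/
import Mathlib

section
/- The function f(s) = ln(s²)/(π²(s²-1)) for s ∈ ℝ \ {-1, 0, 1} (extended by 1/π² at s = ±1 and by continuity at 0 where the expression tends to +∞ integrably) is a probability density function: it is nonnegative where defined and ∫_{-∞}^{∞} ln(s²)/(π²(s²-1)) ds = 1. -/
open MeasureTheory Real

open Set Filter Topology

set_option maxHeartbeats 1000000


lemma hasSum_odd_sq : HasSum (fun n : ℕ => (1:ℝ) / (2*(n:ℝ)+1)^2) (π^2/8) := by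
  have hfull : HasSum (fun n : ℕ => (1:ℝ) / (n:ℝ)^2) (π^2/6) := hasSum_zeta_two
  have heven : HasSum (fun n : ℕ => (1:ℝ) / ((2*n:ℕ):ℝ)^2) (π^2/24) := by
    have h := hfull.mul_left (4:ℝ)⁻¹
    have he : (fun n : ℕ => (4:ℝ)⁻¹ * (1 / (n:ℝ)^2)) = fun n : ℕ => (1:ℝ) / ((2*n:ℕ):ℝ)^2 := by
      funext n
      rcases Nat.eq_zero_or_pos n with h0|h0
      · simp [h0]
      · have hn : (n:ℝ) ≠ 0 := Nat.cast_ne_zero.2 h0.ne'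
        push_cast
        field_simp
        ring
    rw [he] at h
    convert h using 1
    · exact rfl
    ring
  have hso : Summable (fun n : ℕ => (1:ℝ) / ((2*n+1:ℕ):ℝ)^2) :=
    hfull.summable.comp_injective (fun a b hab => by omega)
  have hodd : HasSum (fun n : ℕ => (1:ℝ) / ((2*n+1:ℕ):ℝ)^2)
      (∑' n : ℕ, (1:ℝ) / ((2*n+1:ℕ):ℝ)^2) := hso.hasSum
  have hcomb := HasSum.even_add_odd (f := fun n : ℕ => (1:ℝ)/(n:ℝ)^2) heven hodd
  have huniq := hcomb.unique hfull
  have hval : (∑' n : ℕ, (1:ℝ) / ((2*n+1:ℕ):ℝ)^2) = π^2/8 := by linarith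
  rw [hval] at hodd
  convert hodd using 2 with n
  push_cast
  ring

lemma neg_log_le_rpow {x : ℝ} (hx : 0 < x) : -Real.log x ≤ 2 * x ^ (-(1/2) : ℝ) := by
  have h1 : Real.log (x ^ (-(1/2):ℝ)) ≤ x ^ (-(1/2):ℝ) := by
    have := Real.add_one_le_exp (Real.log (x ^ (-(1/2):ℝ)))
    have h2 := Real.log_le_sub_one_of_pos (Real.rpow_pos_of_pos hx (-(1/2):ℝ))
    nlinarith [Real.rpow_pos_of_pos hx (-(1/2):ℝ)]
  rw [Real.log_rpow hx] at h1
  linarith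

lemma integrableA (k : ℕ) :
    IntegrableOn (fun x : ℝ => -Real.log x * x ^ k) (Ioc 0 1) := by
  have hg : IntegrableOn (fun x : ℝ => 2 * x ^ (-(1/2) : ℝ)) (Ioc 0 1) := by
    have := (intervalIntegral.intervalIntegrable_rpow' (a := 0) (b := 1)
      (r := -(1/2)) (by norm_num)).const_mul 2
    rwa [intervalIntegrable_iff_integrableOn_Ioc_of_le (by norm_num)] at this
  refine Integrable.mono hg ?_ ?_
  · exact ((Real.measurable_log.neg.mul (measurable_id.pow_const k)).aestronglyMeasurable)
  · filter_upwards [ae_restrict_mem measurableSet_Ioc] with x hx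
    have hx0 : 0 < x := hx.1
    have hlog : 0 ≤ -Real.log x := by
      simpa using Real.log_nonpos hx0.le hx.2
    have hpow : x ^ k ≤ 1 := pow_le_one₀ hx0.le hx.2
    have hb : 0 ≤ 2 * x ^ (-(1/2) : ℝ) := by positivity
    rw [Real.norm_eq_abs, Real.norm_eq_abs, abs_of_nonneg hb,
      abs_of_nonneg (mul_nonneg hlog (pow_nonneg hx0.le k))]
    calc -Real.log x * x ^ k ≤ -Real.log x * 1 :=
          mul_le_mul_of_nonneg_left hpow hlog
      _ = -Real.log x := mul_one _
      _ ≤ 2 * x ^ (-(1/2) : ℝ) := neg_log_le_rpow hx0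

lemma integralA (k : ℕ) :
    ∫ x in Ioc (0:ℝ) 1, -Real.log x * x ^ k = 1 / ((k:ℝ)+1)^2 := by
  set F : ℝ → ℝ := fun x => x^(k+1)/((k:ℝ)+1)^2 + x^k * Real.negMulLog x / ((k:ℝ)+1) with hF
  have hk1 : ((k:ℝ)+1) ≠ 0 := by positivity
  have hcont : ContinuousOn F (Icc 0 1) := by
    apply Continuous.continuousOn
    fun_prop
  have hderiv : ∀ x ∈ Ioo (0:ℝ) 1, HasDerivAt F (-Real.log x * x ^ k) x := by
    intro x hx
    have hx0 : x ≠ 0 := hx.1.ne'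
    have hFeq : F = fun x => x^(k+1)/((k:ℝ)+1)^2 - x^(k+1) * Real.log x / ((k:ℝ)+1) := by
      funext y
      simp only [hF, Real.negMulLog, pow_succ]
      ring
    rw [hFeq]
    have h1 : HasDerivAt (fun x : ℝ => x^(k+1)) (((k:ℝ)+1)*x^k) x := by
      simpa using hasDerivAt_pow (k+1) x
    have h2 : HasDerivAt Real.log x⁻¹ x := Real.hasDerivAt_log hx0
    have h3 : HasDerivAt (fun x : ℝ => x^(k+1) * Real.log x)
        (((k:ℝ)+1)*x^k * Real.log x + x^(k+1) * x⁻¹) x := h1.mul h2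
    have := (h1.div_const (((k:ℝ)+1)^2)).sub (h3.div_const ((k:ℝ)+1))
    refine this.congr_deriv ?_
    have : x^(k+1) * x⁻¹ = x^k := by
      rw [pow_succ, mul_assoc, mul_inv_cancel₀ hx0, mul_one]
    rw [this]
    field_simp
    ring
  have hint : IntervalIntegrable (fun x : ℝ => -Real.log x * x ^ k) volume 0 1 := by
    rw [intervalIntegrable_iff_integrableOn_Ioc_of_le (by norm_num)]
    exact integrableA k
  have := intervalIntegral.integral_eq_sub_of_hasDeriv_right_of_le (by norm_num : (0:ℝ) ≤ 1)
    hcont (fun x hx => (hderiv x hx).hasDerivWithinAt) hint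
  rw [intervalIntegral.integral_of_le (by norm_num : (0:ℝ) ≤ 1)] at this
  rw [this]
  simp [hF, Real.negMulLog]

lemma auxB (k : ℕ) :
    IntegrableOn (fun x : ℝ => Real.log x / x ^ (k+2)) (Ioi 1) ∧
    ∫ x in Ioi (1:ℝ), Real.log x / x ^ (k+2) = 1 / ((k:ℝ)+1)^2 := by
  set G : ℝ → ℝ := fun x => -(((k:ℝ)+1)⁻¹ * (Real.log x * (x^(k+1))⁻¹))
      - (((k:ℝ)+1)^2)⁻¹ * (x^(k+1))⁻¹ with hG
  have hk1 : ((k:ℝ)+1) ≠ 0 := by positivity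
  have hcont : ContinuousWithinAt G (Ici 1) 1 := by
    apply ContinuousAt.continuousWithinAt
    have h1 : (1:ℝ)^(k+1) ≠ 0 := by norm_num
    fun_prop (disch := intros; positivity)
  have hderiv : ∀ x ∈ Ioi (1:ℝ), HasDerivAt G (Real.log x / x ^ (k+2)) x := by
    intro x hx
    have hx0 : (0:ℝ) < x := lt_trans one_pos hx
    have hx0' : x ≠ 0 := hx0.ne'
    have hp : x ^ (k+1) ≠ 0 := pow_ne_zero _ hx0'
    have h1 : HasDerivAt (fun x : ℝ => x^(k+1)) (((k:ℝ)+1)*x^k) x := by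
      simpa using hasDerivAt_pow (k+1) x
    have h2 : HasDerivAt Real.log x⁻¹ x := Real.hasDerivAt_log hx0'
    have hinv : HasDerivAt (fun x : ℝ => (x^(k+1))⁻¹)
        (-(((k:ℝ)+1)*x^k) / (x^(k+1))^2) x := h1.inv hp
    have h3 : HasDerivAt (fun x : ℝ => Real.log x * (x^(k+1))⁻¹)
        (x⁻¹ * (x^(k+1))⁻¹ + Real.log x * (-(((k:ℝ)+1)*x^k) / (x^(k+1))^2)) x :=
      h2.mul hinv
    have := ((h3.const_mul (((k:ℝ)+1)⁻¹)).neg).sub (hinv.const_mul ((((k:ℝ)+1)^2)⁻¹))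
    refine this.congr_deriv ?_
    field_simp
    ring
  have g'pos : ∀ x ∈ Ioi (1:ℝ), 0 ≤ Real.log x / x ^ (k+2) := by
    intro x hx
    have hx1 : (1:ℝ) ≤ x := le_of_lt hx
    have := Real.log_nonneg hx1
    positivity
  have htend : Tendsto G atTop (𝓝 0) := by
    have hb : Tendsto (fun x : ℝ => Real.log x / x) atTop (𝓝 0) :=
      Real.isLittleO_log_id_atTop.tendsto_div_nhds_zero
    have hT : Tendsto (fun x : ℝ => Real.log x * (x^(k+1))⁻¹) atTop (𝓝 0) := by
      apply tendsto_of_tendsto_of_tendsto_of_le_of_le' tendsto_const_nhds hb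
      · filter_upwards [eventually_ge_atTop (1:ℝ)] with x hx
        have := Real.log_nonneg hx
        positivity
      · filter_upwards [eventually_ge_atTop (1:ℝ)] with x hx
        have hx0 : (0:ℝ) < x := lt_of_lt_of_le one_pos hx
        have hlog : 0 ≤ Real.log x := Real.log_nonneg hx
        have hle : x ≤ x^(k+1) := le_self_pow₀ hx (Nat.succ_ne_zero k)
        rw [← div_eq_mul_inv]
        gcongr
  
    have t2 : Tendsto (fun x : ℝ => (x^(k+1) : ℝ)⁻¹) atTop (𝓝 0) :=
      tendsto_inv_atTop_zero.comp (tendsto_pow_atTop (Nat.succ_ne_zero k))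
    have := ((hT.const_mul (((k:ℝ)+1)⁻¹)).neg).sub (t2.const_mul ((((k:ℝ)+1)^2)⁻¹))
    simp only [hG]
    convert this using 2 with x
    ring
  refine ⟨integrableOn_Ioi_deriv_of_nonneg hcont hderiv g'pos htend, ?_⟩
  rw [integral_Ioi_of_hasDerivAt_of_nonneg hcont hderiv g'pos htend]
  simp [hG]

noncomputable def gg (s : ℝ) : ℝ := Real.log (s ^ 2) / (π ^ 2 * (s ^ 2 - 1))

lemma gg_nonneg (s : ℝ) : 0 ≤ gg s := by
  unfold gg
  rcases lt_trichotomy (s^2) 1 with h|h|h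
  · have hlog : Real.log (s^2) ≤ 0 := Real.log_nonpos (sq_nonneg s) h.le
    have hden : π^2 * (s^2 - 1) ≤ 0 := by
      have := Real.pi_pos
      nlinarith
    rw [← neg_div_neg_eq]
    exact div_nonneg (by linarith) (by linarith)
  · rw [h]
    simp
  · have hlog : 0 ≤ Real.log (s^2) := Real.log_nonneg h.le
    have hden : 0 ≤ π^2 * (s^2 - 1) := by
      have := Real.pi_pos
      nlinarith
    exact div_nonneg hlog hden

lemma gg_meas : Measurable gg := by
  unfold gg
  exact (Real.measurable_log.comp (measurable_id'.pow_const 2)).div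
    (measurable_const.mul ((measurable_id'.pow_const 2).sub measurable_const))

lemma L1 : ∫⁻ x in Ioo (0:ℝ) 1, ENNReal.ofReal (gg x) = ENNReal.ofReal (1/4) := by
  have hπ : (π:ℝ) ≠ 0 := Real.pi_ne_zero
  have hnn : ∀ (n : ℕ) (x : ℝ), 0 < x → x < 1 → 0 ≤ 2/π^2 * (-Real.log x * x^(2*n)) := by
    intro n x hx0 hx1
    have hlog : 0 ≤ -Real.log x := by simpa using Real.log_nonpos hx0.le hx1.le
    positivity
  have hpt : ∀ x ∈ Ioo (0:ℝ) 1, ENNReal.ofReal (gg x)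
      = ∑' n : ℕ, ENNReal.ofReal (2/π^2 * (-Real.log x * x^(2*n))) := by
    intro x hx
    have hx0 := hx.1
    have hx1 := hx.2
    have hxx : x^2 < 1 := by nlinarith
    have hfe : (fun n : ℕ => 2/π^2 * (-Real.log x * x^(2*n)))
        = fun n : ℕ => (2/π^2 * -Real.log x) * (x^2)^n := by
      funext n; rw [pow_mul]; ring
    have hsum : Summable (fun n : ℕ => 2/π^2 * (-Real.log x * x^(2*n))) := by
      rw [hfe]
      exact (summable_geometric_of_lt_one (sq_nonneg x) hxx).mul_left _
    rw [← ENNReal.ofReal_tsum_of_nonneg (fun n => hnn n x hx0 hx1) hsum]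
    congr 1
    rw [hfe, tsum_mul_left, tsum_geometric_of_lt_one (sq_nonneg x) hxx]
    unfold gg
    rw [Real.log_pow]
    have h1 : x^2 - 1 ≠ 0 := by nlinarith
    have h2 : 1 - x^2 ≠ 0 := by nlinarith
    field_simp
    ring
  rw [setLIntegral_congr_fun measurableSet_Ioo hpt]
  rw [lintegral_tsum (f := fun n x => ENNReal.ofReal (2/π^2 * (-Real.log x * x^(2*n))))
    (fun n => ((Real.measurable_log.neg.mul
    (measurable_id'.pow_const (2*n))).const_mul (2/π^2)).ennreal_ofReal.aemeasurable)]
  have hterm : ∀ n : ℕ, ∫⁻ x in Ioo (0:ℝ) 1,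
      ENNReal.ofReal (2/π^2 * (-Real.log x * x^(2*n)))
      = ENNReal.ofReal (2/π^2 * (1/(2*(n:ℝ)+1)^2)) := by
    intro n
    have hint : IntegrableOn (fun x : ℝ => 2/π^2 * (-Real.log x * x^(2*n))) (Ioo 0 1) :=
      (((integrableA (2*n)).mono_set Ioo_subset_Ioc_self).const_mul _)
    rw [← ofReal_integral_eq_lintegral_ofReal hint]
    · congr 1
      rw [integral_const_mul]
      rw [← MeasureTheory.integral_Ioc_eq_integral_Ioo, integralA (2*n)]
      congr 1
      push_cast
      ring
    · filter_upwards [ae_restrict_mem measurableSet_Ioo] with x hx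
      exact hnn n x hx.1 hx.2
  simp_rw [hterm]
  rw [← ENNReal.ofReal_tsum_of_nonneg]
  · congr 1
    rw [tsum_mul_left, hasSum_odd_sq.tsum_eq]
    field_simp
    ring
  · intro n; positivity
  · exact hasSum_odd_sq.summable.mul_left _

lemma L2 : ∫⁻ x in Ioi (1:ℝ), ENNReal.ofReal (gg x) = ENNReal.ofReal (1/4) := by
  have hπ : (π:ℝ) ≠ 0 := Real.pi_ne_zero
  have hnn : ∀ (n : ℕ) (x : ℝ), 1 < x → 0 ≤ 2/π^2 * (Real.log x / x^(2*n+2)) := by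
    intro n x hx1
    have hlog : 0 ≤ Real.log x := Real.log_nonneg hx1.le
    have hx0 : (0:ℝ) < x := lt_trans one_pos hx1
    positivity
  have hpt : ∀ x ∈ Ioi (1:ℝ), ENNReal.ofReal (gg x)
      = ∑' n : ℕ, ENNReal.ofReal (2/π^2 * (Real.log x / x^(2*n+2))) := by
    intro x hx
    have hx1 : (1:ℝ) < x := hx
    have hx0 : (0:ℝ) < x := lt_trans one_pos hx1
    have hxx : 1 < x^2 := by nlinarith
    have hinv1 : (x^2)⁻¹ < 1 := by
      rw [inv_lt_one_iff₀]; right; exact hxx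
    have hinv0 : 0 ≤ (x^2)⁻¹ := by positivity
    have hfe : (fun n : ℕ => 2/π^2 * (Real.log x / x^(2*n+2)))
        = fun n : ℕ => (2/π^2 * Real.log x / x^2) * ((x^2)⁻¹)^n := by
      funext n
      rw [pow_add, pow_mul, ← inv_pow]
      ring
    have hsum : Summable (fun n : ℕ => 2/π^2 * (Real.log x / x^(2*n+2))) := by
      rw [hfe]
      exact (summable_geometric_of_lt_one hinv0 hinv1).mul_left _
    rw [← ENNReal.ofReal_tsum_of_nonneg (fun n => hnn n x hx1) hsum]
    congr 1
    rw [hfe, tsum_mul_left, tsum_geometric_of_lt_one hinv0 hinv1]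
    unfold gg
    rw [Real.log_pow]
    have h1 : x^2 - 1 ≠ 0 := by nlinarith
    have h2 : x ≠ 0 := hx0.ne'
    field_simp
    ring
  rw [setLIntegral_congr_fun measurableSet_Ioi hpt]
  rw [lintegral_tsum (f := fun n x => ENNReal.ofReal (2/π^2 * (Real.log x / x^(2*n+2))))
    (fun n => ((Real.measurable_log.div
    (measurable_id'.pow_const (2*n+2))).const_mul (2/π^2)).ennreal_ofReal.aemeasurable)]
  have hterm : ∀ n : ℕ, ∫⁻ x in Ioi (1:ℝ),
      ENNReal.ofReal (2/π^2 * (Real.log x / x^(2*n+2)))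
      = ENNReal.ofReal (2/π^2 * (1/(2*(n:ℝ)+1)^2)) := by
    intro n
    have hint : IntegrableOn (fun x : ℝ => 2/π^2 * (Real.log x / x^(2*n+2))) (Ioi 1) :=
      ((auxB (2*n)).1.const_mul _)
    rw [← ofReal_integral_eq_lintegral_ofReal hint]
    · congr 1
      rw [integral_const_mul, (auxB (2*n)).2]
      congr 1
      push_cast
      ring
    · filter_upwards [ae_restrict_mem measurableSet_Ioi] with x hx
      exact hnn n x hx
  simp_rw [hterm]
  rw [← ENNReal.ofReal_tsum_of_nonneg]
  · congr 1
    rw [tsum_mul_left, hasSum_odd_sq.tsum_eq]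
    field_simp
    ring
  · intro n; positivity
  · exact hasSum_odd_sq.summable.mul_left _

/-- `f(s) = ln(s²)/(π²(s²-1))` is a probability density: nonnegative away from
`{-1, 0, 1}` and with total integral 1 over ℝ. -/
theorem stmt_7 :
    (∀ s : ℝ, s ≠ -1 → s ≠ 0 → s ≠ 1 →
        0 ≤ Real.log (s ^ 2) / (π ^ 2 * (s ^ 2 - 1))) ∧
      ∫ s : ℝ, Real.log (s ^ 2) / (π ^ 2 * (s ^ 2 - 1)) = 1 := by
  constructor
  · intro s _ _ _
    exact gg_nonneg s
  · have hIoi0 : ∫⁻ x in Ioi (0:ℝ), ENNReal.ofReal (gg x) = ENNReal.ofReal (1/2) := by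
      rw [← Ioc_union_Ioi_eq_Ioi (zero_le_one (α := ℝ))]
      rw [lintegral_union measurableSet_Ioi (Set.Ioc_disjoint_Ioi le_rfl)]
      rw [← setLIntegral_congr (Ioo_ae_eq_Ioc (a := (0:ℝ)) (b := 1)), L1, L2]
      rw [← ENNReal.ofReal_add (by norm_num) (by norm_num)]
      norm_num
    have hIio0 : ∫⁻ x in Iio (0:ℝ), ENNReal.ofReal (gg x)
        = ENNReal.ofReal (1/2) := by
      have hrefl := (Measure.measurePreserving_neg (volume : Measure ℝ)).setLIntegral_comp_preimage_emb
        measurableEmbedding_neg (fun x => ENNReal.ofReal (gg x)) (Iio 0)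
      have hpre : (Neg.neg ⁻¹' (Iio (0:ℝ))) = Ioi 0 := by
        ext x; simp
      have heven : (fun a : ℝ => ENNReal.ofReal (gg (-a))) = fun a => ENNReal.ofReal (gg a) := by
        funext a
        unfold gg
        rw [neg_sq]
      rw [hpre] at hrefl
      rw [← hrefl]
      simp only [heven]
      exact hIoi0
    have key : ∫⁻ x : ℝ, ENNReal.ofReal (gg x) = 1 := by
      rw [← lintegral_add_compl (fun x => ENNReal.ofReal (gg x)) (measurableSet_Iio (a := (0:ℝ)))]
      rw [compl_Iio, hIio0]
      have : ∫⁻ x in Ici (0:ℝ), ENNReal.ofReal (gg x) = ENNReal.ofReal (1/2) := by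
        rw [← setLIntegral_congr (Ioi_ae_eq_Ici (a := (0:ℝ)))]
        exact hIoi0
      rw [this, ← ENNReal.ofReal_add (by norm_num) (by norm_num)]
      norm_num
    have hnn : 0 ≤ᵐ[volume] gg := ae_of_all _ gg_nonneg
    have := MeasureTheory.integral_eq_lintegral_of_nonneg_ae hnn gg_meas.aestronglyMeasurable
    unfold gg at this key
    rw [this, key]
    simp
end

section
/- For all s > 0 with s ≠ 1, the integral ∫_{-∞}^{∞} |x|/((1+x²)(x² + s²)) dx equals ln(s²)/(s² - 1). -/
open Real MeasureTheory Filter Topology Set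

private lemma aux_tendsto (s : ℝ) (hs : 0 < s) :
    Tendsto (fun x : ℝ => (Real.log (1 + x ^ 2) - Real.log (x ^ 2 + s ^ 2)) / (2 * (s ^ 2 - 1)))
      atTop (𝓝 0) := by
  have hr : Tendsto (fun x : ℝ => (1 + x ^ 2) / (x ^ 2 + s ^ 2)) atTop (𝓝 1) := by
    have hd : Tendsto (fun x : ℝ => x ^ 2 + s ^ 2) atTop atTop :=
      (tendsto_pow_atTop (two_ne_zero)).atTop_add tendsto_const_nhds
    have h0 : Tendsto (fun x : ℝ => (1 - s ^ 2) / (x ^ 2 + s ^ 2)) atTop (𝓝 0) :=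
      Tendsto.div_atTop tendsto_const_nhds hd
    have h : Tendsto (fun x : ℝ => 1 + (1 - s ^ 2) / (x ^ 2 + s ^ 2)) atTop (𝓝 (1 + 0)) :=
      tendsto_const_nhds.add h0
    rw [add_zero] at h
    refine h.congr' ?_
    filter_upwards [eventually_gt_atTop (0:ℝ)] with x hx
    have e2 : (x ^ 2 + s ^ 2) ≠ 0 := by positivity
    field_simp
    ring
  have hlog : Tendsto (fun x : ℝ => Real.log ((1 + x ^ 2) / (x ^ 2 + s ^ 2))) atTop
      (𝓝 (Real.log 1)) := hr.log one_ne_zero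
  rw [Real.log_one] at hlog
  have h2 : Tendsto (fun x : ℝ => Real.log ((1 + x ^ 2) / (x ^ 2 + s ^ 2)) / (2 * (s ^ 2 - 1)))
      atTop (𝓝 (0 / (2 * (s ^ 2 - 1)))) := hlog.div_const _
  rw [zero_div] at h2
  refine h2.congr' ?_
  filter_upwards [eventually_gt_atTop (0:ℝ)] with x hx
  have e1 : (1 + x ^ 2) ≠ 0 := by positivity
  have e2 : (x ^ 2 + s ^ 2) ≠ 0 := by positivity
  rw [Real.log_div e1 e2]

private lemma aux_deriv (s : ℝ) (hs : 0 < s) (hc : s ^ 2 - 1 ≠ 0) (x : ℝ) :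
    HasDerivAt (fun x : ℝ => (Real.log (1 + x ^ 2) - Real.log (x ^ 2 + s ^ 2)) / (2 * (s ^ 2 - 1)))
      (x / ((1 + x ^ 2) * (x ^ 2 + s ^ 2))) x := by
  have e1 : (0:ℝ) < 1 + x ^ 2 := by positivity
  have e2 : (0:ℝ) < x ^ 2 + s ^ 2 := by positivity
  have h1 : HasDerivAt (fun x : ℝ => 1 + x ^ 2) (2 * x) x := by
    simpa using ((hasDerivAt_pow 2 x).const_add 1)
  have h2 : HasDerivAt (fun x : ℝ => x ^ 2 + s ^ 2) (2 * x) x := by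
    simpa using ((hasDerivAt_pow 2 x).add_const (s ^ 2))
  have h3 := ((h1.log e1.ne').sub (h2.log e2.ne')).div_const (2 * (s ^ 2 - 1))
  refine h3.congr_deriv ?_
  have e1' : (1 + x ^ 2) ≠ 0 := e1.ne'
  have e2' : (x ^ 2 + s ^ 2) ≠ 0 := e2.ne'
  field_simp
  ring

/-- For `s > 0`, `s ≠ 1`: `∫_{-∞}^{∞} |x|/((1+x²)(x²+s²)) dx = ln(s²)/(s²-1)`. -/
theorem stmt_9 (s : ℝ) (hs : 0 < s) (hs1 : s ≠ 1) :
    ∫ x : ℝ, |x| / ((1 + x ^ 2) * (x ^ 2 + s ^ 2)) = Real.log (s ^ 2) / (s ^ 2 - 1) := by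
  have hc : s ^ 2 - 1 ≠ 0 := by
    intro h
    apply hs1
    nlinarith
  have h1 : (∫ x : ℝ, |x| / ((1 + x ^ 2) * (x ^ 2 + s ^ 2)))
      = ∫ x : ℝ, (fun t => t / ((1 + t ^ 2) * (t ^ 2 + s ^ 2))) |x| := by
    congr 1; funext x; simp [sq_abs]
  have h2 := integral_comp_abs (f := fun t : ℝ => t / ((1 + t ^ 2) * (t ^ 2 + s ^ 2)))
  rw [h1, h2]
  have hnonneg : ∀ x ∈ Ioi (0:ℝ), 0 ≤ x / ((1 + x ^ 2) * (x ^ 2 + s ^ 2)) := by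
    intro x hx
    have : (0:ℝ) < x := hx
    positivity
  rw [integral_Ioi_of_hasDerivAt_of_nonneg' (fun x _ => aux_deriv s hs hc x) hnonneg
    (aux_tendsto s hs)]
  simp only [ne_eq, OfNat.ofNat_ne_zero, not_false_eq_true, zero_pow, zero_add, add_zero,
    Real.log_one]
  field_simp
  ring
end

section
/- For every real t, (2/π) ∫₀^{π/2} exp(-|t| sin(2θ)) dθ = I₀(|t|) − L₀(|t|), where I₀ is the modified Bessel function of the first kind of order 0 and L₀ is the modified Struve function of order 0. -/
open Real MeasureTheory
open scoped Nat

lemma exp_tsum (x : ℝ) : Real.exp x = ∑' n : ℕ, x ^ n / n ! := by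
  rw [Real.exp_eq_exp_ℝ, NormedSpace.exp_eq_tsum_div]

lemma prod_P1 (k : ℕ) :
    ∏ i ∈ Finset.range k, (2 * (i : ℝ) + 1) / (2 * i + 2)
      = (2 * k)! / (4 ^ k * (k !) ^ 2) := by
  induction k with
  | zero => simp
  | succ k ih =>
    rw [Finset.prod_range_succ, ih]
    have h1 : ((k ! : ℝ)) ≠ 0 := Nat.cast_ne_zero.2 k.factorial_ne_zero
    have h2 : (2 * (k + 1))! = (2 * k + 2) * ((2 * k + 1) * (2 * k)!) := by
      rw [show 2 * (k + 1) = (2 * k + 1) + 1 by ring, Nat.factorial_succ, Nat.factorial_succ]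
    rw [h2, Nat.factorial_succ]
    push_cast
    have h4 : (4 : ℝ) ^ k ≠ 0 := by positivity
    field_simp
    ring

lemma prod_P2 (k : ℕ) :
    ∏ i ∈ Finset.range k, (2 * (i : ℝ) + 2) / (2 * i + 3)
      = 4 ^ k * (k !) ^ 2 / (2 * k + 1)! := by
  induction k with
  | zero => simp
  | succ k ih =>
    rw [Finset.prod_range_succ, ih]
    have h1 : ((2 * k + 1)! : ℝ) ≠ 0 := Nat.cast_ne_zero.2 (2 * k + 1).factorial_ne_zero
    have h2 : (2 * (k + 1) + 1)! = (2 * k + 3) * ((2 * k + 2) * (2 * k + 1)!) := by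
      rw [show 2 * (k + 1) + 1 = (2 * k + 2) + 1 by ring, Nat.factorial_succ, Nat.factorial_succ]
    rw [h2, show (k+1)! = (k+1) * k ! from Nat.factorial_succ k]
    push_cast
    field_simp
    ring

lemma gamma_three_halves (k : ℕ) :
    Real.Gamma ((k : ℝ) + 3 / 2) = Real.sqrt π * (2 * k + 1)! / (2 * 4 ^ k * k !) := by
  induction k with
  | zero =>
    have : (0 : ℝ) + 3 / 2 = 1 / 2 + 1 := by norm_num
    rw [Nat.cast_zero, this, Real.Gamma_add_one (by norm_num), Real.Gamma_one_half_eq]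
    norm_num
    ring
  | succ k ih =>
    have h : ((k + 1 : ℕ) : ℝ) + 3 / 2 = ((k : ℝ) + 3 / 2) + 1 := by push_cast; ring
    rw [h, Real.Gamma_add_one (by positivity), ih]
    have h2 : (2 * (k + 1) + 1)! = (2 * k + 3) * ((2 * k + 2) * (2 * k + 1)!) := by
      rw [show 2 * (k + 1) + 1 = (2 * k + 2) + 1 by ring, Nat.factorial_succ, Nat.factorial_succ]
    rw [h2, show (k+1)! = (k+1) * k ! from Nat.factorial_succ k]
    have h1 : ((k ! : ℝ)) ≠ 0 := Nat.cast_ne_zero.2 k.factorial_ne_zero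
    have h4 : (4 : ℝ) ^ k ≠ 0 := by positivity
    push_cast
    field_simp
    ring

lemma four_pow_le (k : ℕ) : 4 ^ k * (k !) ^ 2 ≤ (2 * k + 1)! := by
  induction k with
  | zero => simp
  | succ k ih =>
    have h2 : (2 * (k + 1) + 1)! = (2 * k + 3) * ((2 * k + 2) * (2 * k + 1)!) := by
      rw [show 2 * (k + 1) + 1 = (2 * k + 2) + 1 by ring, Nat.factorial_succ, Nat.factorial_succ]
    rw [h2, Nat.factorial_succ]
    calc 4 ^ (k + 1) * ((k + 1) * k !) ^ 2
        = ((2 * k + 2) * (2 * k + 2)) * (4 ^ k * (k !) ^ 2) := by ring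
      _ ≤ ((2 * k + 3) * (2 * k + 2)) * (2 * k + 1)! := by
          exact Nat.mul_le_mul (Nat.mul_le_mul (by omega) le_rfl) ih
      _ = (2 * k + 3) * ((2 * k + 2) * (2 * k + 1)!) := by ring

lemma gamma_three_halves_ge (k : ℕ) :
    Real.sqrt π / 2 * k ! ≤ Real.Gamma ((k : ℝ) + 3 / 2) := by
  rw [gamma_three_halves]
  rw [div_mul_eq_mul_div, div_le_div_iff₀ two_pos (by positivity)]
  have h := four_pow_le k
  have h' : (4 : ℝ) ^ k * (k !) ^ 2 ≤ ((2 * k + 1)! : ℝ) := by exact_mod_cast h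
  have hs : (0 : ℝ) ≤ Real.sqrt π := Real.sqrt_nonneg _
  nlinarith [Real.sqrt_nonneg π, (by exact_mod_cast k.factorial_pos : (0:ℝ) < k !)]

lemma summable_bessel (a : ℝ) (ha : 0 ≤ a) :
    Summable (fun k : ℕ => (a / 2) ^ (2 * k) / ((k ! : ℝ)) ^ 2) := by
  apply Summable.of_nonneg_of_le (fun k => by positivity) _
    (Real.summable_pow_div_factorial (a ^ 2 / 4))
  intro k
  have hk1 : (1 : ℝ) ≤ (k ! : ℝ) := by exact_mod_cast k.factorial_pos
  have h0 : (0 : ℝ) < (k ! : ℝ) := by linarith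
  rw [show (a / 2) ^ (2 * k) = (a ^ 2 / 4) ^ k by rw [pow_mul]; ring_nf]
  exact div_le_div_of_nonneg_left (by positivity) h0 (by nlinarith)

lemma summable_struve (a : ℝ) (ha : 0 ≤ a) :
    Summable (fun k : ℕ => (a / 2) ^ (2 * k + 1) / (Real.Gamma ((k : ℝ) + 3 / 2)) ^ 2) := by
  refine Summable.of_nonneg_of_le (fun k => ?_) (fun k => ?_)
    ((Real.summable_pow_div_factorial (a ^ 2 / 4)).mul_left ((a / 2) * (4 / π)))
  · have := Real.Gamma_pos_of_pos (show (0:ℝ) < (k : ℝ) + 3/2 by positivity)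
    positivity
  · have hγ := gamma_three_halves_ge k
    have hγpos : 0 < Real.Gamma ((k : ℝ) + 3 / 2) :=
      Real.Gamma_pos_of_pos (by positivity)
    have hk1 : (1 : ℝ) ≤ (k ! : ℝ) := by exact_mod_cast k.factorial_pos
    have hsπ : (0 : ℝ) < Real.sqrt π := Real.sqrt_pos.2 pi_pos
    have hsq : Real.sqrt π ^ 2 = π := Real.sq_sqrt pi_pos.le
    have hpos : (0 : ℝ) < Real.sqrt π / 2 * (k ! : ℝ) := by positivity
    calc (a / 2) ^ (2 * k + 1) / Real.Gamma ((k : ℝ) + 3 / 2) ^ 2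
        ≤ (a / 2) ^ (2 * k + 1) / (Real.sqrt π / 2 * (k ! : ℝ)) ^ 2 :=
          div_le_div_of_nonneg_left (by positivity) (by positivity)
            (by nlinarith)
      _ = (a / 2) * (4 / π) * ((a ^ 2 / 4) ^ k / (k ! : ℝ) ^ 2) := by
          have h2 : (Real.sqrt π / 2 * (k ! : ℝ)) ^ 2 = π / 4 * (k ! : ℝ) ^ 2 := by
            rw [mul_pow, div_pow, hsq]; norm_num
          rw [h2, pow_succ, show (a / 2) ^ (2 * k) = (a ^ 2 / 4) ^ k by rw [pow_mul]; ring_nf]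
          field_simp
      _ ≤ (a / 2) * (4 / π) * ((a ^ 2 / 4) ^ k / (k ! : ℝ)) := by
          refine mul_le_mul_of_nonneg_left ?_ (by positivity)
          exact div_le_div_of_nonneg_left (by positivity) (by positivity) (by nlinarith)




open Real

/-- Modified Bessel function of the first kind of order 0. -/
noncomputable def besselI0 (x : ℝ) : ℝ := ∑' k : ℕ, (x / 2) ^ (2 * k) / ((Nat.factorial k : ℝ)) ^ 2

/-- Modified Struve function of order 0. -/
noncomputable def struveL0 (x : ℝ) : ℝ :=
  ∑' k : ℕ, (x / 2) ^ (2 * k + 1) / (Real.Gamma ((k : ℝ) + 3 / 2)) ^ 2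

/-- `(2/π) ∫₀^{π/2} exp(-|t| sin 2θ) dθ = I₀(|t|) − L₀(|t|)`. -/
theorem stmt_11 (t : ℝ) :
    (2 / π) * ∫ θ in (0 : ℝ)..(π / 2), Real.exp (-|t| * Real.sin (2 * θ)) =
      besselI0 |t| - struveL0 |t| := by
  set a := |t| with ha_def
  have ha : 0 ≤ a := abs_nonneg t
  have hπ2 : (0:ℝ) ≤ π / 2 := by positivity
  set μ := volume.restrict (Set.Ioc (0:ℝ) (π/2)) with hμ
  set F : ℕ → ℝ → ℝ := fun n θ => (-a * Real.sin (2*θ)) ^ n / n ! with hF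
  have hF_int : ∀ n, Integrable (F n) μ := by
    intro n
    have hc : Continuous (F n) := by rw [hF]; fun_prop
    exact hc.integrableOn_Ioc
  have hbound : ∀ n θ, ‖F n θ‖ ≤ a ^ n / n ! := by
    intro n θ
    have hs : |(-a * Real.sin (2*θ))| ≤ a := by
      rw [abs_mul, abs_neg, abs_of_nonneg ha]
      calc a * |Real.sin (2*θ)| ≤ a * 1 :=
            mul_le_mul_of_nonneg_left (Real.abs_sin_le_one _) ha
        _ = a := mul_one a
    calc ‖F n θ‖ = |(-a * Real.sin (2*θ))| ^ n / n ! := by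
          rw [hF, Real.norm_eq_abs, abs_div, abs_pow, Nat.abs_cast]
      _ ≤ a ^ n / n ! := by
          have : (0:ℝ) < n ! := by exact_mod_cast n.factorial_pos
          gcongr
  have hF_sum : Summable (fun n => ∫ θ, ‖F n θ‖ ∂μ) := by
    apply Summable.of_nonneg_of_le
      (fun n => integral_nonneg (fun θ => norm_nonneg _)) _
      ((Real.summable_pow_div_factorial a).mul_left (π/2))
    intro n
    have h1 : ∫ θ, ‖F n θ‖ ∂μ ≤ ∫ _θ, a ^ n / n ! ∂μ :=
      integral_mono (hF_int n).norm (integrable_const _) (hbound n)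
    have h2 : ∫ _θ, a ^ n / n ! ∂μ = (π/2) * (a ^ n / n !) := by
      rw [integral_const]
      simp [hμ, Real.volume_Ioc, ENNReal.toReal_ofReal hπ2, hπ2]
    rw [h2] at h1
    exact h1
  have hkey := MeasureTheory.hasSum_integral_of_summable_integral_norm hF_int hF_sum
  have hptw : ∀ θ : ℝ, (∑' n : ℕ, F n θ) = Real.exp (-a * Real.sin (2*θ)) := by
    intro θ
    rw [hF, exp_tsum (-a * Real.sin (2*θ))]
  simp_rw [hptw] at hkey
  have hWn : ∀ n, (∫ θ, F n θ ∂μ)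
      = (-a)^n / n ! * (2⁻¹ * ∫ x in (0:ℝ)..π, Real.sin x ^ n) := by
    intro n
    have h1 : (∫ θ, F n θ ∂μ) = ∫ θ in (0:ℝ)..(π/2), F n θ :=
      (intervalIntegral.integral_of_le hπ2).symm
    rw [h1, hF]
    have h2 : ∀ θ : ℝ, (-a * Real.sin (2*θ))^n / (n ! : ℝ)
        = ((-a)^n / n !) * Real.sin (2*θ)^n := by
      intro θ; rw [mul_pow]; ring
    simp only [h2]
    rw [intervalIntegral.integral_const_mul]
    congr 1
    have h3 := intervalIntegral.integral_comp_mul_left (a := (0:ℝ)) (b := π/2)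
      (fun x => Real.sin x ^ n) (c := 2) two_ne_zero
    simp only [mul_zero] at h3
    rw [show (2:ℝ) * (π/2) = π by ring] at h3
    rw [h3, smul_eq_mul]
  have hkey' : HasSum (fun n => (-a)^n / n ! * (2⁻¹ * ∫ x in (0:ℝ)..π, Real.sin x ^ n))
      (∫ θ, Real.exp (-a * Real.sin (2*θ)) ∂μ) := by
    rwa [show (fun n => ∫ θ, F n θ ∂μ)
      = fun n => (-a)^n / n ! * (2⁻¹ * ∫ x in (0:ℝ)..π, Real.sin x ^ n) from funext hWn] at hkey
  have hge : ∀ k : ℕ, ((-a)^(2*k) / (2*k)! * (2⁻¹ * ∫ x in (0:ℝ)..π, Real.sin x ^ (2*k)))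
      = (π/2) * ((a/2)^(2*k) / ((k ! : ℝ)) ^ 2) := by
    intro k
    rw [integral_sin_pow_even, prod_P1, Even.neg_pow (even_two_mul k)]
    have h1 : ((2*k)! : ℝ) ≠ 0 := Nat.cast_ne_zero.2 (2*k).factorial_ne_zero
    have h2 : ((k ! : ℝ)) ≠ 0 := Nat.cast_ne_zero.2 k.factorial_ne_zero
    have h3 : (a/2)^(2*k) = a^(2*k) / 4^k := by
      rw [div_pow, pow_mul, pow_mul]; norm_num
    rw [h3]
    have h4 : (4:ℝ)^k ≠ 0 := by positivity
    field_simp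
  have hgo : ∀ k : ℕ, ((-a)^(2*k+1) / (2*k+1)! * (2⁻¹ * ∫ x in (0:ℝ)..π, Real.sin x ^ (2*k+1)))
      = -((π/2) * ((a/2)^(2*k+1) / Real.Gamma ((k:ℝ) + 3/2) ^ 2)) := by
    intro k
    rw [integral_sin_pow_odd, prod_P2, Odd.neg_pow (odd_two_mul_add_one k), gamma_three_halves]
    have h1 : ((2*k+1)! : ℝ) ≠ 0 := Nat.cast_ne_zero.2 (2*k+1).factorial_ne_zero
    have h2 : ((k ! : ℝ)) ≠ 0 := Nat.cast_ne_zero.2 k.factorial_ne_zero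
    have hsq : Real.sqrt π ^ 2 = π := Real.sq_sqrt pi_pos.le
    have hsπ : Real.sqrt π ≠ 0 := by positivity
    have h16 : ((4:ℝ)^k)^2 = 16^k := by
      rw [← pow_mul, mul_comm k 2, pow_mul]; norm_num
    have h4 : (4:ℝ)^k ≠ 0 := by positivity
    have hden : (Real.sqrt π * ((2*k+1)! : ℝ) / (2 * 4^k * (k ! : ℝ))) ^ 2
        = π * ((2*k+1)! : ℝ)^2 / (4 * 16^k * ((k ! : ℝ))^2) := by
      rw [div_pow, mul_pow, hsq, mul_pow, mul_pow, h16]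
      norm_num
    have h3 : (a/2)^(2*k+1) = a^(2*k+1) / (2 * 4^k) := by
      rw [div_pow]; congr 1; rw [pow_succ, pow_mul]; norm_num; ring
    rw [h3, hden]
    have h16' : (16:ℝ)^k ≠ 0 := by positivity
    field_simp
    rw [show (16:ℝ)^k = 4^(k*2) by rw [pow_mul']; norm_num]
    ring
  have he : HasSum (fun k : ℕ => (π/2) * ((a/2)^(2*k) / ((k ! : ℝ)) ^ 2))
      ((π/2) * besselI0 a) :=
    (summable_bessel a ha).hasSum.mul_left (π/2)
  have ho : HasSum (fun k : ℕ => -((π/2) * ((a/2)^(2*k+1) / Real.Gamma ((k:ℝ) + 3/2) ^ 2)))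
      (-((π/2) * struveL0 a)) :=
    ((summable_struve a ha).hasSum.mul_left (π/2)).neg
  have htotal : HasSum (fun n => (-a)^n / n ! * (2⁻¹ * ∫ x in (0:ℝ)..π, Real.sin x ^ n))
      ((π/2) * besselI0 a + -((π/2) * struveL0 a)) := by
    refine HasSum.even_add_odd ?_ ?_
    · rw [show (fun k : ℕ => (-a)^(2*k) / (2*k)! * (2⁻¹ * ∫ x in (0:ℝ)..π, Real.sin x ^ (2*k)))
        = fun k : ℕ => (π/2) * ((a/2)^(2*k) / ((k ! : ℝ)) ^ 2) from funext hge]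
      exact he
    · rw [show (fun k : ℕ => (-a)^(2*k+1) / (2*k+1)! * (2⁻¹ * ∫ x in (0:ℝ)..π, Real.sin x ^ (2*k+1)))
        = fun k : ℕ => -((π/2) * ((a/2)^(2*k+1) / Real.Gamma ((k:ℝ) + 3/2) ^ 2)) from funext hgo]
      exact ho
  have hval : (∫ θ, Real.exp (-a * Real.sin (2*θ)) ∂μ)
      = (π/2) * besselI0 a + -((π/2) * struveL0 a) := hkey'.unique htotal
  rw [intervalIntegral.integral_of_le hπ2]
  rw [show (∫ θ in Set.Ioc (0:ℝ) (π/2), Real.exp (-a * Real.sin (2*θ))) = _ from hval]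
  have hπ : (π:ℝ) ≠ 0 := pi_ne_zero
  field_simp
  ring
end

section
/- For every a > 0, the function f(r) = (2 ln(a + √(a² + r²)) − ln(r²)) / (π² √(a² + r²)) for r ≠ 0 is a probability density function on ℝ: it is nonnegative and its integral over ℝ equals 1. -/
open MeasureTheory Real Set

private lemma oddSum12 : ∑' k : ℕ, (1:ℝ)/(2*(k:ℝ)+1)^2 = π^2/8 := by
  have hb := hasSum_zeta_two
  have hs : Summable (fun n : ℕ => (1:ℝ)/(n:ℝ)^2) := hb.summable
  have he : Summable (fun k : ℕ => (1:ℝ)/((2*k : ℕ):ℝ)^2) :=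
    hs.comp_injective (mul_right_injective₀ two_ne_zero)
  have ho : Summable (fun k : ℕ => (1:ℝ)/((2*k+1 : ℕ):ℝ)^2) :=
    hs.comp_injective ((add_left_injective 1).comp (mul_right_injective₀ two_ne_zero))
  have key := tsum_even_add_odd (f := fun n : ℕ => (1:ℝ)/(n:ℝ)^2) he ho
  have h1 : (∑' k : ℕ, (1:ℝ)/((2*k : ℕ):ℝ)^2) = (1/4) * ∑' n : ℕ, (1:ℝ)/(n:ℝ)^2 := by
    rw [← tsum_mul_left]
    refine tsum_congr fun k => ?_
    push_cast
    rcases eq_or_ne (k:ℝ) 0 with h | h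
    · simp [h]
    · field_simp; ring
  have h2 : (∑' k : ℕ, (1:ℝ)/((2*k+1 : ℕ):ℝ)^2) = ∑' k : ℕ, (1:ℝ)/(2*(k:ℝ)+1)^2 := by
    refine tsum_congr fun k => ?_
    push_cast
    ring_nf
  rw [h1, h2, hb.tsum_eq] at key
  linarith


private lemma expImg12 : (fun t : ℝ => Real.exp (-t)) '' (Ioi 0) = Ioo (0:ℝ) 1 := by
  ext x
  simp only [mem_image, mem_Ioi, mem_Ioo]
  constructor
  · rintro ⟨t, ht, rfl⟩
    exact ⟨Real.exp_pos _, Real.exp_lt_one_iff.2 (by linarith)⟩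
  · rintro ⟨h0, h1⟩
    exact ⟨-Real.log x, by simpa using Real.log_neg h0 h1, by rw [neg_neg, Real.exp_log h0]⟩

private lemma powLog12 (n : ℕ) :
    IntegrableOn (fun x : ℝ => (-Real.log x) * x ^ n) (Ioo 0 1) ∧
      ∫ x in Ioo (0:ℝ) 1, (-Real.log x) * x ^ n = 1/((n:ℝ)+1)^2 := by
  have hderiv : ∀ t ∈ Ioi (0:ℝ),
      HasDerivWithinAt (fun t : ℝ => Real.exp (-t)) (-Real.exp (-t)) (Ioi 0) t := by
    intro t _
    have : HasDerivAt (fun t : ℝ => Real.exp (-t)) (-Real.exp (-t)) t := by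
      simpa [Function.comp_def, mul_comm] using
        (Real.hasDerivAt_exp (-t)).comp t (hasDerivAt_neg t)
    exact this.hasDerivWithinAt
  have hinj : InjOn (fun t : ℝ => Real.exp (-t)) (Ioi 0) :=
    (Real.exp_injective.comp neg_injective).injOn
  have hpt : ∀ t ∈ Ioi (0:ℝ),
      |-Real.exp (-t)| • ((-Real.log (Real.exp (-t))) * (Real.exp (-t)) ^ n)
        = t * Real.exp (-(((n:ℝ)+1) * t)) := by
    intro t _
    rw [abs_neg, abs_of_pos (Real.exp_pos _), Real.log_exp, neg_neg, smul_eq_mul,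
      ← Real.exp_nat_mul]
    rw [show (-(((n:ℝ)+1)*t)) = (-t) + ((n:ℝ)*(-t)) by ring, Real.exp_add]
    ring
  have hval2 : ∫ t in Ioi (0:ℝ), t * Real.exp (-(((n:ℝ)+1) * t)) = 1/((n:ℝ)+1)^2 := by
    have h := integral_rpow_mul_exp_neg_mul_Ioi (a := 2) (r := (n:ℝ)+1)
      (by norm_num) (by positivity)
    rw [show (2:ℝ)-1 = 1 by norm_num] at h
    simp only [Real.rpow_one] at h
    rw [h, Real.Gamma_two, mul_one, show (2:ℝ) = ((2:ℕ):ℝ) by norm_num, Real.rpow_natCast,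
      div_pow, one_pow]
  have hint : IntegrableOn (fun t : ℝ => t * Real.exp (-(((n:ℝ)+1) * t))) (Ioi 0) := by
    by_contra h
    rw [integral_undef h] at hval2
    have : (0:ℝ) < 1/((n:ℝ)+1)^2 := by positivity
    linarith [hval2]
  constructor
  · rw [← expImg12, integrableOn_image_iff_integrableOn_abs_deriv_smul measurableSet_Ioi
      hderiv hinj]
    exact (hint.congr_fun (fun t ht => (hpt t ht).symm) measurableSet_Ioi)
  · rw [← expImg12, integral_image_eq_integral_abs_deriv_smul measurableSet_Ioi hderiv hinj,
      setIntegral_congr_fun measurableSet_Ioi hpt, hval2]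

private lemma core12 : ∫ x in Ioo (0:ℝ) 1, (-Real.log x)/(1-x^2) = π^2/8 := by
  have hI : ∀ k : ℕ, ∫ x in Ioo (0:ℝ) 1, (-Real.log x) * x ^ (2*k) = 1/(2*(k:ℝ)+1)^2 := by
    intro k
    rw [(powLog12 (2*k)).2]
    push_cast; ring_nf
  have hmeas : ∀ k : ℕ, AEStronglyMeasurable (fun x : ℝ => (-Real.log x) * x ^ (2*k))
      (volume.restrict (Ioo 0 1)) := fun k =>
    ((Real.measurable_log.neg).mul (measurable_id.pow_const _)).aestronglyMeasurable
  have hnn : ∀ k : ℕ, ∀ x ∈ Ioo (0:ℝ) 1, 0 ≤ (-Real.log x) * x ^ (2*k) := fun k x hx =>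
    mul_nonneg (neg_nonneg.2 (Real.log_nonpos hx.1.le hx.2.le)) (pow_nonneg hx.1.le _)
  have hlint : ∀ k : ℕ, ∫⁻ x in Ioo (0:ℝ) 1, ‖(-Real.log x) * x ^ (2*k)‖ₑ
      = ENNReal.ofReal (1/(2*(k:ℝ)+1)^2) := by
    intro k
    rw [← ofReal_integral_norm_eq_lintegral_enorm (powLog12 (2*k)).1]
    congr 1
    rw [← hI k]
    refine setIntegral_congr_fun measurableSet_Ioo fun x hx => ?_
    rw [Real.norm_eq_abs, abs_of_nonneg (hnn k x hx)]
  have hsum : Summable (fun k : ℕ => (1:ℝ)/(2*(k:ℝ)+1)^2) := by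
    have := (Real.summable_one_div_nat_pow (p := 2)).2 (by norm_num)
    refine Summable.of_nonneg_of_le (fun k => by positivity) (fun k => ?_)
      (this.comp_injective (add_left_injective 1))
    have hk : (0:ℝ) < (k:ℝ)+1 := by positivity
    simp only [Function.comp]
    gcongr
    push_cast
    nlinarith [Nat.cast_nonneg (α := ℝ) k]
  have heq : EqOn (fun x : ℝ => (-Real.log x)/(1-x^2))
      (fun x : ℝ => ∑' k : ℕ, (-Real.log x) * x ^ (2*k)) (Ioo 0 1) := by
    intro x hx
    have hx2 : x^2 < 1 := by nlinarith [hx.1, hx.2]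
    simp only
    rw [div_eq_mul_inv, ← tsum_geometric_of_lt_one (sq_nonneg x) hx2, ← tsum_mul_left]
    exact tsum_congr fun k => by rw [pow_mul]
  rw [setIntegral_congr_fun measurableSet_Ioo heq, integral_tsum hmeas ?_]
  · rw [tsum_congr hI, oddSum12]
  · simp only [hlint]
    rw [← ENNReal.ofReal_tsum_of_nonneg (fun k => by positivity) hsum]
    exact ENNReal.ofReal_ne_top

/-- For `a > 0`, `f(r) = (2 ln(a + √(a²+r²)) − ln(r²))/(π² √(a²+r²))` is a
probability density on ℝ. -/
theorem stmt_12 (a : ℝ) (ha : 0 < a) :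
    (∀ r : ℝ, r ≠ 0 →
        0 ≤ (2 * Real.log (a + Real.sqrt (a ^ 2 + r ^ 2)) - Real.log (r ^ 2)) /
              (π ^ 2 * Real.sqrt (a ^ 2 + r ^ 2))) ∧
      ∫ r : ℝ, (2 * Real.log (a + Real.sqrt (a ^ 2 + r ^ 2)) - Real.log (r ^ 2)) /
          (π ^ 2 * Real.sqrt (a ^ 2 + r ^ 2)) = 1 := by
  constructor
  · -- nonnegativity
    intro r hr
    have hspos : 0 < Real.sqrt (a ^ 2 + r ^ 2) := Real.sqrt_pos.2 (by positivity)
    have habs : |r| ≤ Real.sqrt (a ^ 2 + r ^ 2) := by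
      rw [← Real.sqrt_sq_eq_abs]
      exact Real.sqrt_le_sqrt (by nlinarith)
    apply div_nonneg _ (by positivity)
    have hr2 : (0:ℝ) < r ^ 2 := by positivity
    have hle : r ^ 2 ≤ (a + Real.sqrt (a ^ 2 + r ^ 2)) ^ 2 := by
      nlinarith [sq_abs r, abs_nonneg r]
    have := Real.log_le_log hr2 hle
    rw [Real.log_pow, Real.log_pow] at this
    push_cast at this
    rw [show Real.log (r ^ 2) = 2 * Real.log r by rw [Real.log_pow]; push_cast; ring]
    linarith
  · -- the integral
    set F : ℝ → ℝ := fun r =>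
      (2 * Real.log (a + Real.sqrt (a ^ 2 + r ^ 2)) - Real.log (r ^ 2)) /
        (π ^ 2 * Real.sqrt (a ^ 2 + r ^ 2)) with hF
    have h2 : ∫ x : ℝ, F |x| = 2 * ∫ x in Ioi (0:ℝ), F x := integral_comp_abs (f := F)
    have habsF : ∀ x : ℝ, F |x| = F x := fun x => by simp only [hF, sq_abs]
    simp only [habsF] at h2
    show ∫ r : ℝ, F r = 1
    rw [h2]
    -- substitution r = 2ax/(1-x²)
    set ψ : ℝ → ℝ := fun x => 2*a*x/(1-x^2) with hψ
    have himg : ψ '' Ioo 0 1 = Ioi (0:ℝ) := by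
      ext r
      simp only [mem_image, mem_Ioo, mem_Ioi, hψ]
      constructor
      · rintro ⟨x, ⟨hx0, hx1⟩, rfl⟩
        have : 0 < 1 - x^2 := by nlinarith
        positivity
      · intro hr
        set s := Real.sqrt (a ^ 2 + r ^ 2) with hs
        have hs2 : s ^ 2 = a ^ 2 + r ^ 2 := Real.sq_sqrt (by positivity)
        have hsa : a < s := by
          rw [hs]
          exact (Real.lt_sqrt ha.le).2 (by nlinarith)
        have hsr : s < r + a := by
          rw [hs]
          exact (Real.sqrt_lt' (by linarith)).2 (by nlinarith)
        have hsa0 : (0:ℝ) < s - a := by linarith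
        refine ⟨(s - a)/r, ⟨div_pos hsa0 hr, ?_⟩, ?_⟩
        · rw [div_lt_one hr]; linarith
        · have h1 : 1 - ((s - a)/r)^2 = 2*a*(s-a)/r^2 := by
            field_simp
            nlinarith [hs2]
          rw [h1]
          field_simp [hr.ne', hsa0.ne', ha.ne']
    have hinj : InjOn ψ (Ioo 0 1) := by
      intro x hx y hy h
      simp only [hψ] at h
      have hx2 : (0:ℝ) < 1 - x^2 := by nlinarith [hx.1, hx.2]
      have hy2 : (0:ℝ) < 1 - y^2 := by nlinarith [hy.1, hy.2]
      rw [div_eq_div_iff (by positivity) (by positivity)] at h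
      have h' : (x - y) * (1 + x*y) = 0 := by nlinarith [h]
      rcases mul_eq_zero.1 h' with h'' | h''
      · linarith [sub_eq_zero.1 h'']
      · nlinarith [hx.1, hy.1]
    have hderiv : ∀ x ∈ Ioo (0:ℝ) 1,
        HasDerivWithinAt ψ (2*a*(1+x^2)/(1-x^2)^2) (Ioo 0 1) x := by
      intro x hx
      have hx2 : (1:ℝ) - x^2 ≠ 0 := by nlinarith [hx.1, hx.2]
      have h1 : HasDerivAt ψ ((2*a*(1-x^2) - 2*a*x*(-(2*x)))/(1-x^2)^2) x := by
        have hu : HasDerivAt (fun x : ℝ => 2*a*x) (2*a) x := by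
          simpa using (hasDerivAt_id x).const_mul (2*a)
        have hv : HasDerivAt (fun x : ℝ => 1-x^2) (-(2*x)) x := by
          simpa using ((hasDerivAt_pow 2 x).const_sub 1)
        exact hu.div hv hx2
      have : (2*a*(1-x^2) - 2*a*x*(-(2*x)))/(1-x^2)^2 = 2*a*(1+x^2)/(1-x^2)^2 := by
        ring_nf
      rw [this] at h1
      exact h1.hasDerivWithinAt
    rw [← himg, integral_image_eq_integral_abs_deriv_smul measurableSet_Ioo hderiv hinj]
    have hpt : ∀ x ∈ Ioo (0:ℝ) 1,
        |2*a*(1+x^2)/(1-x^2)^2| • F (ψ x) = (4/π^2) * ((-Real.log x)/(1-x^2)) := by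
      intro x hx
      obtain ⟨hx0, hx1⟩ := hx
      have h1x : (0:ℝ) < 1 - x^2 := by nlinarith
      have hψx : 0 < ψ x := by rw [hψ]; positivity
      have hsqrt : Real.sqrt (a ^ 2 + (ψ x) ^ 2) = a*(1+x^2)/(1-x^2) := by
        rw [show a ^ 2 + (ψ x) ^ 2 = (a*(1+x^2)/(1-x^2))^2 by rw [hψ]; field_simp; ring]
        exact Real.sqrt_sq (by positivity)
      have hlog : 2 * Real.log (a + Real.sqrt (a ^ 2 + (ψ x) ^ 2)) - Real.log ((ψ x) ^ 2)
          = -2 * Real.log x := by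
        rw [hsqrt, Real.log_pow, show a + a*(1+x^2)/(1-x^2) = 2*a/(1-x^2) by field_simp; ring,
          show ψ x = x * (2*a/(1-x^2)) by rw [hψ]; ring,
          Real.log_mul (ne_of_gt hx0) (by positivity)]
        push_cast
        ring
      rw [hF]
      simp only
      rw [hlog, hsqrt, abs_of_pos (by positivity), smul_eq_mul]
      have hπ : π ≠ 0 := Real.pi_ne_zero
      field_simp
      ring
    rw [setIntegral_congr_fun measurableSet_Ioo hpt, integral_const_mul, core12]
    have hπ : π ≠ 0 := Real.pi_ne_zero
    field_simp
    ring
end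

section
/- For every a > 0, the density f(r) = (2 ln(a + √(a² + r²)) − ln(r²)) / (π² √(a² + r²)) on ℝ has infinite absolute first moment: ∫_{-∞}^{∞} |r| f(r) dr = ∞. -/
open MeasureTheory Real

lemma lintegral_inv_Ioi_top {R : ℝ} (hR : 0 ≤ R) :
    ∫⁻ r in Set.Ioi R, ENNReal.ofReal r⁻¹ = ⊤ := by
  by_contra h
  have hmeas : AEStronglyMeasurable (fun r : ℝ => r⁻¹)
      ((volume : Measure ℝ).restrict (Set.Ioi R)) :=
    measurable_inv.aestronglyMeasurable
  have hnn : 0 ≤ᵐ[(volume : Measure ℝ).restrict (Set.Ioi R)] fun r : ℝ => r⁻¹ := by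
    filter_upwards [ae_restrict_mem measurableSet_Ioi] with x hx
    exact inv_nonneg.2 (le_trans hR (le_of_lt hx))
  have hfin : HasFiniteIntegral (fun r : ℝ => r⁻¹)
      ((volume : Measure ℝ).restrict (Set.Ioi R)) := by
    rw [hasFiniteIntegral_iff_ofReal hnn]
    exact lt_top_iff_ne_top.2 h
  exact not_IntegrableOn_Ioi_inv ⟨hmeas, hfin⟩

/-- For `a > 0`, the density `f(r) = (2 ln(a + √(a²+r²)) − ln(r²))/(π² √(a²+r²))`
has infinite absolute first moment. -/
theorem stmt_13 (a : ℝ) (ha : 0 < a) :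
    ∫⁻ r : ℝ, ENNReal.ofReal
        (|r| * ((2 * Real.log (a + Real.sqrt (a ^ 2 + r ^ 2)) - Real.log (r ^ 2)) /
          (π ^ 2 * Real.sqrt (a ^ 2 + r ^ 2)))) = ⊤ := by
  set R : ℝ := max a 1 with hRdef
  have hR0 : 0 < R := lt_of_lt_of_le one_pos (le_max_right _ _)
  have hπ : 0 < π ^ 2 := by positivity
  -- pointwise lower bound on Ioi R
  have key : ∀ r ∈ Set.Ioi R,
      ENNReal.ofReal (a / (2 * π ^ 2) * r⁻¹) ≤
      ENNReal.ofReal (|r| * ((2 * Real.log (a + Real.sqrt (a ^ 2 + r ^ 2)) -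
        Real.log (r ^ 2)) / (π ^ 2 * Real.sqrt (a ^ 2 + r ^ 2)))) := by
    intro r hr
    have hra : a < r := lt_of_le_of_lt (le_max_left a 1) hr
    have hr1 : 1 < r := lt_of_le_of_lt (le_max_right a 1) hr
    have hr0 : 0 < r := lt_trans one_pos hr1
    set s : ℝ := Real.sqrt (a ^ 2 + r ^ 2) with hs
    have hs_ge : r ≤ s := by
      have : Real.sqrt (r ^ 2) ≤ s := Real.sqrt_le_sqrt (by nlinarith)
      rwa [Real.sqrt_sq hr0.le] at this
    have hs_le : s ≤ a + r := by
      have h1 : Real.sqrt (a ^ 2 + r ^ 2) ≤ Real.sqrt ((a + r) ^ 2) :=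
        Real.sqrt_le_sqrt (by nlinarith)
      rwa [Real.sqrt_sq (by positivity)] at h1
    have hs0 : 0 < s := lt_of_lt_of_le hr0 hs_ge
    -- log bound
    have hlog1 : Real.log (a + r) - Real.log r ≥ a / (2 * r) := by
      have hx : (0 : ℝ) < (a + r) / r := by positivity
      have h1 : 1 - ((a + r) / r)⁻¹ ≤ Real.log ((a + r) / r) :=
        Real.one_sub_inv_le_log_of_pos hx
      rw [Real.log_div (by positivity) hr0.ne'] at h1
      have hinv : ((a + r) / r)⁻¹ = r / (a + r) := by
        rw [inv_div]
      rw [hinv] at h1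
      have h2 : 1 - r / (a + r) = a / (a + r) := by
        field_simp
        ring
      rw [h2] at h1
      have h3 : a / (2 * r) ≤ a / (a + r) := by
        apply div_le_div_of_nonneg_left ha.le (by positivity) (by linarith)
      linarith
    have hmono : Real.log (a + r) ≤ Real.log (a + s) :=
      Real.log_le_log (by positivity) (by linarith)
    have hlr : Real.log (r ^ 2) = 2 * Real.log r := by
      rw [sq, Real.log_mul hr0.ne' hr0.ne']; ring
    -- numerator bound
    have hN : a / r ≤ 2 * Real.log (a + s) - Real.log (r ^ 2) := by
      rw [hlr]
      have : a / r = 2 * (a / (2 * r)) := by ring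
      rw [this]
      nlinarith [hlog1, hmono]
    have hNnn : (0 : ℝ) ≤ 2 * Real.log (a + s) - Real.log (r ^ 2) :=
      le_trans (by positivity) hN
    -- denominator bound
    have hD0 : 0 < π ^ 2 * s := by positivity
    have hD : π ^ 2 * s ≤ 2 * π ^ 2 * r := by nlinarith
    -- main real inequality
    apply ENNReal.ofReal_le_ofReal
    have heq : a / (2 * π ^ 2) * r⁻¹ = a / (2 * π ^ 2 * r) := by
      field_simp
    rw [heq, abs_of_pos hr0, mul_div_assoc']
    have hrN : a ≤ r * (2 * Real.log (a + s) - Real.log (r ^ 2)) := by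
      have h4 := mul_le_mul_of_nonneg_left hN hr0.le
      have h5 : r * (a / r) = a := by field_simp
      linarith
    exact div_le_div₀ (by positivity) hrN hD0 hD
  -- compare integrals
  have h1 : ∫⁻ r in Set.Ioi R, ENNReal.ofReal (a / (2 * π ^ 2) * r⁻¹) ≤
      ∫⁻ r : ℝ, ENNReal.ofReal
        (|r| * ((2 * Real.log (a + Real.sqrt (a ^ 2 + r ^ 2)) - Real.log (r ^ 2)) /
          (π ^ 2 * Real.sqrt (a ^ 2 + r ^ 2)))) :=
    le_trans (setLIntegral_mono' measurableSet_Ioi key) (setLIntegral_le_lintegral _ _)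
  -- compute the lower integral
  have h2 : ∫⁻ r in Set.Ioi R, ENNReal.ofReal (a / (2 * π ^ 2) * r⁻¹) = ⊤ := by
    have hc : (0 : ℝ) ≤ a / (2 * π ^ 2) := by positivity
    have heq : ∀ r : ℝ, ENNReal.ofReal (a / (2 * π ^ 2) * r⁻¹) =
        ENNReal.ofReal (a / (2 * π ^ 2)) * ENNReal.ofReal r⁻¹ := fun r =>
      ENNReal.ofReal_mul hc
    simp only [heq]
    rw [lintegral_const_mul _ measurable_inv.ennreal_ofReal, lintegral_inv_Ioi_top hR0.le,
      ENNReal.mul_top]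
    simp only [ne_eq, ENNReal.ofReal_eq_zero, not_le]
    positivity
  exact top_le_iff.1 (h2 ▸ h1)
end
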